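/- Let (A,C)_ψ be an entwining structure with A finitely generated projective over k and φ : A* ⊗ C → A a normalised cointegral map. For entwined modules M, N and a right C-comodule map g : M → N, the map g̃(m) = Σᵢ g(m₍₀₎·aᵢ)·φ(aᵢ* ⊗ m₍₁₎) is a morphism of entwined modules (both A-linear and C-colinear). -/
import Mathlib


open TensorProduct LinearMap

noncomputable section

variable (k A C : Type*) [CommRing k] [Ring A] [Algebra k A]
  [AddCommGroup C] [Module k C] [Coalgebra k C]

/-- An entwining structure `(A,C)_ψ` over `k`. -/
structure Entwining where
  psi : C ⊗[k] A →ₗ[k] A ⊗[k] C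
  mul_compat :
    psi ∘ₗ lTensor C (LinearMap.mul' k A)
      = rTensor C (LinearMap.mul' k A)
        ∘ₗ (TensorProduct.assoc k A A C).symm.toLinearMap
        ∘ₗ lTensor A psi
        ∘ₗ (TensorProduct.assoc k A C A).toLinearMap
        ∘ₗ rTensor A psi
        ∘ₗ (TensorProduct.assoc k C A A).symm.toLinearMap
  one_compat : ∀ c : C, psi (c ⊗ₜ[k] (1 : A)) = (1 : A) ⊗ₜ[k] c
  comul_compat :
    lTensor A (Coalgebra.comul (R := k) (A := C)) ∘ₗ psi
      = (TensorProduct.assoc k A C C).toLinearMap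
        ∘ₗ rTensor C psi
        ∘ₗ (TensorProduct.assoc k C A C).symm.toLinearMap
        ∘ₗ lTensor C psi
        ∘ₗ (TensorProduct.assoc k C C A).toLinearMap
        ∘ₗ rTensor A (Coalgebra.comul (R := k) (A := C))
  counit_compat : ∀ (c : C) (a : A),
    (TensorProduct.rid k A)
        ((lTensor A (Coalgebra.counit (R := k) (A := C))) (psi (c ⊗ₜ[k] a)))
      = Coalgebra.counit (R := k) c • a

variable {k A C} in
/-- `act` is a unital associative right `A`-action on `M`. -/
def IsRAction {M : Type*} [AddCommGroup M] [Module k M]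
    (act : M ⊗[k] A →ₗ[k] M) : Prop :=
  (∀ m : M, act (m ⊗ₜ[k] (1 : A)) = m) ∧
  act ∘ₗ lTensor M (LinearMap.mul' k A)
    = act ∘ₗ rTensor A act ∘ₗ (TensorProduct.assoc k M A A).symm.toLinearMap

variable {k A C} in
/-- `coact` is a counital coassociative right `C`-coaction on `M`. -/
def IsRCoaction {M : Type*} [AddCommGroup M] [Module k M]
    (coact : M →ₗ[k] M ⊗[k] C) : Prop :=
  (∀ m : M, (TensorProduct.rid k M)
      ((lTensor M (Coalgebra.counit (R := k) (A := C))) (coact m)) = m) ∧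
  rTensor C coact ∘ₗ coact
    = (TensorProduct.assoc k M C C).symm.toLinearMap
      ∘ₗ lTensor M (Coalgebra.comul (R := k) (A := C)) ∘ₗ coact

variable {k A C} in
/-- The compatibility condition making `(M, act, coact)` an entwined
`(A,C)_ψ`-module: `ρ^M(m·a) = m₍₀₎·a_α ⊗ m₍₁₎^α`. -/
def IsEntwinedModule (E : Entwining k A C) {M : Type*} [AddCommGroup M] [Module k M]
    (act : M ⊗[k] A →ₗ[k] M) (coact : M →ₗ[k] M ⊗[k] C) : Prop :=
  IsRAction act ∧ IsRCoaction coact ∧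
  coact ∘ₗ act
    = rTensor C act
      ∘ₗ (TensorProduct.assoc k M A C).symm.toLinearMap
      ∘ₗ lTensor M E.psi
      ∘ₗ (TensorProduct.assoc k M C A).toLinearMap
      ∘ₗ rTensor A coact

variable {k A C} in
/-- A morphism of entwined modules: right `A`-linear and right `C`-colinear. -/
def IsEntwinedHom {M N : Type*} [AddCommGroup M] [Module k M]
    [AddCommGroup N] [Module k N]
    (actM : M ⊗[k] A →ₗ[k] M) (coactM : M →ₗ[k] M ⊗[k] C)
    (actN : N ⊗[k] A →ₗ[k] N) (coactN : N →ₗ[k] N ⊗[k] C)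
    (f : M →ₗ[k] N) : Prop :=
  (f ∘ₗ actM = actN ∘ₗ rTensor A f) ∧ (coactN ∘ₗ f = rTensor C f ∘ₗ coactM)

variable {k A C} in
/-- `ψ( - ⊗ a₀) : C →ₗ A ⊗ C`. -/
def psiAt (E : Entwining k A C) (a₀ : A) : C →ₗ[k] A ⊗[k] C :=
  E.psi ∘ₗ ((TensorProduct.mk k C A).flip a₀)

variable {k A C} in
/-- `φ(ξ₀ ⊗ -) : C →ₗ A` for a cointegral-type map `φ : A* ⊗ C → A`. -/
def cointAt (φc : Module.Dual k A ⊗[k] C →ₗ[k] A) (ξ₀ : Module.Dual k A) :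
    C →ₗ[k] A :=
  φc ∘ₗ (TensorProduct.mk k (Module.Dual k A) C ξ₀)

variable {k A C} in
/-- `φ : A* ⊗ C → A` is a normalised cointegral map in `(A,C)_ψ`
(Definition 4.6), relative to a finite dual basis `{aᵢ, aᵢ*}` of `A`
(so that `coev_A(1) = Σᵢ aᵢ ⊗ aᵢ*`). -/
def IsNormalisedCointegralMap (E : Entwining k A C) (n : ℕ)
    (aB : Fin n → A) (aD : Fin n → Module.Dual k A)
    (φc : Module.Dual k A ⊗[k] C →ₗ[k] A) : Prop :=
  -- (1) `(A⊗ψ)∘(ψ⊗φ)∘(C⊗coev_A⊗C)∘Δ = (A⊗φ⊗C)∘(coev_A⊗Δ)`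
  (∀ c : C,
    ∑ i, (lTensor A E.psi)
        ((TensorProduct.assoc k A C A)
          ((TensorProduct.map (psiAt E (aB i)) (cointAt φc (aD i)))
            (Coalgebra.comul (R := k) c)))
      = ∑ i, (aB i) ⊗ₜ[k]
          ((rTensor C (cointAt φc (aD i))) (Coalgebra.comul (R := k) c))) ∧
  -- (2) `(A⊗μ)∘(A⊗φ⊗A)∘(coev_A⊗C⊗A) = (μ⊗φ)∘(A⊗coev_A⊗C)∘ψ`
  (∀ (c : C) (a : A),
    (∑ i, (aB i) ⊗ₜ[k] (φc ((aD i) ⊗ₜ[k] c) * a))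
      = (∑ i, TensorProduct.map (LinearMap.mulRight k (aB i))
            (cointAt φc (aD i)))
          (E.psi (c ⊗ₜ[k] a))) ∧
  -- (3) `μ∘(A⊗φ)∘(coev_A⊗C) = 1_A ∘ ε`
  (∀ c : C,
    ∑ i, (aB i) * φc ((aD i) ⊗ₜ[k] c)
      = (Coalgebra.counit (R := k) c) • (1 : A))

variable {k A C} in
/-- The averaged map `g̃(m) = Σᵢ g(m₍₀₎·aᵢ) · φ(aᵢ* ⊗ m₍₁₎)` (Lemma 4.8). -/
def cointAvg (n : ℕ) (aB : Fin n → A) (aD : Fin n → Module.Dual k A)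
    (φc : Module.Dual k A ⊗[k] C →ₗ[k] A)
    {M N : Type*} [AddCommGroup M] [Module k M] [AddCommGroup N] [Module k N]
    (actM : M ⊗[k] A →ₗ[k] M) (coactM : M →ₗ[k] M ⊗[k] C)
    (actN : N ⊗[k] A →ₗ[k] N) (g : M →ₗ[k] N) : M →ₗ[k] N :=
  actN
  ∘ₗ (∑ i, TensorProduct.map
        (g ∘ₗ actM ∘ₗ ((TensorProduct.mk k M A).flip (aB i)))
        (cointAt φc (aD i)))
  ∘ₗ coactM

variable {k A C} in
lemma act_act_aux {M : Type*} [AddCommGroup M] [Module k M]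
    {act : M ⊗[k] A →ₗ[k] M} (h : IsRAction act) (m : M) (a b : A) :
    act (act (m ⊗ₜ[k] a) ⊗ₜ[k] b) = act (m ⊗ₜ[k] (a * b)) := by
  have := LinearMap.congr_fun h.2 (m ⊗ₜ[k] (a ⊗ₜ[k] b))
  simpa using this.symm
set_option maxHeartbeats 2000000 in
/-- for `A` f.g. projective over `k` with dual basis `{aᵢ, aᵢ*}`,
a normalised cointegral map `φ`, entwined modules `M, N` and a right
`C`-comodule map `g : M → N`, the map `g̃(m) = Σᵢ g(m₍₀₎·aᵢ)·φ(aᵢ* ⊗ m₍₁₎)`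
is a morphism of entwined modules. -/
theorem cointAvg_is_entwinedHom (E : Entwining k A C)
    (n : ℕ) (aB : Fin n → A) (aD : Fin n → Module.Dual k A)
    (hdual : ∀ a : A, ∑ i, (aD i a) • (aB i) = a)
    (φc : Module.Dual k A ⊗[k] C →ₗ[k] A)
    (hφ : IsNormalisedCointegralMap E n aB aD φc)
    (M N : Type*) [AddCommGroup M] [Module k M] [AddCommGroup N] [Module k N]
    (actM : M ⊗[k] A →ₗ[k] M) (coactM : M →ₗ[k] M ⊗[k] C)
    (actN : N ⊗[k] A →ₗ[k] N) (coactN : N →ₗ[k] N ⊗[k] C)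
    (hM : IsEntwinedModule E actM coactM) (hN : IsEntwinedModule E actN coactN)
    (g : M →ₗ[k] N) (hg : coactN ∘ₗ g = rTensor C g ∘ₗ coactM) :
    IsEntwinedHom actM coactM actN coactN
      (cointAvg n aB aD φc actM coactM actN g) := by
  obtain ⟨hMa, hMc, hMe⟩ := hM
  obtain ⟨hNa, hNc, hNe⟩ := hN
  obtain ⟨hφ1, hφ2, hφ3⟩ := hφ
  set S : M ⊗[k] C →ₗ[k] N ⊗[k] A :=
    ∑ i, TensorProduct.map (g ∘ₗ actM ∘ₗ ((TensorProduct.mk k M A).flip (aB i)))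
        (cointAt φc (aD i)) with hS
  set Gt : M ⊗[k] C →ₗ[k] N := actN ∘ₗ S with hGtd
  have hAvg : cointAvg n aB aD φc actM coactM actN g = Gt ∘ₗ coactM := by
    rw [hGtd, LinearMap.comp_assoc, hS]; rfl
  have hGt : ∀ (m₀ : M) (c : C),
      Gt (m₀ ⊗ₜ[k] c) = ∑ i, actN (g (actM (m₀ ⊗ₜ[k] aB i)) ⊗ₜ[k] φc (aD i ⊗ₜ[k] c)) := by
    intro m₀ c
    simp [hGtd, hS, cointAt, LinearMap.sum_apply, map_sum]
  set ΦM : (M ⊗[k] C) ⊗[k] A →ₗ[k] M ⊗[k] C :=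
    rTensor C actM ∘ₗ (TensorProduct.assoc k M A C).symm.toLinearMap
      ∘ₗ lTensor M E.psi ∘ₗ (TensorProduct.assoc k M C A).toLinearMap with hΦM
  set ΦN : (N ⊗[k] C) ⊗[k] A →ₗ[k] N ⊗[k] C :=
    rTensor C actN ∘ₗ (TensorProduct.assoc k N A C).symm.toLinearMap
      ∘ₗ lTensor N E.psi ∘ₗ (TensorProduct.assoc k N C A).toLinearMap with hΦN
  have hMe' : ∀ (m : M) (a : A), coactM (actM (m ⊗ₜ[k] a)) = ΦM ((coactM m) ⊗ₜ[k] a) := by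
    intro m a
    have := LinearMap.congr_fun hMe (m ⊗ₜ[k] a)
    simpa [hΦM] using this
  have hNe' : ∀ (x : N) (b : A), coactN (actN (x ⊗ₜ[k] b)) = ΦN ((coactN x) ⊗ₜ[k] b) := by
    intro x b
    have := LinearMap.congr_fun hNe (x ⊗ₜ[k] b)
    simpa [hΦN] using this
  have key1 : ∀ (m₀ : M) (τ : A ⊗[k] C),
      Gt ((rTensor C actM) ((TensorProduct.assoc k M A C).symm (m₀ ⊗ₜ[k] τ)))
        = actN ((rTensor A (g ∘ₗ actM ∘ₗ TensorProduct.mk k M A m₀))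
            ((∑ i, TensorProduct.map (LinearMap.mulRight k (aB i)) (cointAt φc (aD i))) τ)) := by
    intro m₀ τ
    induction τ using TensorProduct.induction_on with
    | zero => simp only [tmul_zero, zero_tmul, map_zero, Finset.sum_const_zero]
    | tmul x d =>
        simp only [TensorProduct.assoc_symm_tmul, rTensor_tmul, hGt, LinearMap.sum_apply,
          TensorProduct.map_tmul, map_sum, coe_comp, Function.comp_apply,
          TensorProduct.mk_apply, mulRight_apply, cointAt]
        refine Finset.sum_congr rfl fun i _ => ?_
        rw [act_act_aux hMa]
    | add u v hu hv => simp only [tmul_add, map_add, hu, hv]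
  have key1' : ∀ (σ : M ⊗[k] C) (a : A), Gt (ΦM (σ ⊗ₜ[k] a)) = actN (Gt σ ⊗ₜ[k] a) := by
    intro σ a
    induction σ using TensorProduct.induction_on with
    | zero => simp only [tmul_zero, zero_tmul, map_zero, Finset.sum_const_zero]
    | tmul m₀ c =>
        have h1 : ΦM ((m₀ ⊗ₜ[k] c) ⊗ₜ[k] a)
            = (rTensor C actM) ((TensorProduct.assoc k M A C).symm (m₀ ⊗ₜ[k] E.psi (c ⊗ₜ[k] a))) := by
          simp [hΦM]
        rw [h1, key1, ← hφ2 c a]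
        rw [map_sum, map_sum]
        rw [hGt, TensorProduct.sum_tmul, map_sum]
        refine Finset.sum_congr rfl fun i _ => ?_
        simp only [rTensor_tmul, coe_comp, Function.comp_apply, TensorProduct.mk_apply]
        rw [← act_act_aux hNa]
    | add u v hu hv => simp only [add_tmul, map_add, hu, hv, TensorProduct.add_tmul]
  have part1 : (Gt ∘ₗ coactM) ∘ₗ actM = actN ∘ₗ rTensor A (Gt ∘ₗ coactM) := by
    apply TensorProduct.ext'
    intro m a
    simp only [coe_comp, Function.comp_apply, rTensor_tmul]
    rw [hMe' m a, key1']
  set T : (M ⊗[k] C) ⊗[k] C →ₗ[k] (N ⊗[k] C) ⊗[k] A :=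
    ∑ i, TensorProduct.map
        (rTensor C g ∘ₗ ΦM ∘ₗ (TensorProduct.mk k (M ⊗[k] C) A).flip (aB i))
        (cointAt φc (aD i)) with hTd
  have hT : ∀ (σ : M ⊗[k] C) (c : C),
      T (σ ⊗ₜ[k] c) = ∑ i, (rTensor C g (ΦM (σ ⊗ₜ[k] aB i))) ⊗ₜ[k] φc (aD i ⊗ₜ[k] c) := by
    intro σ c
    simp [hTd, cointAt, LinearMap.sum_apply]
  have key2a : ∀ (m₀ : M) (c : C),
      coactN (Gt (m₀ ⊗ₜ[k] c)) = ΦN (T ((coactM m₀) ⊗ₜ[k] c)) := by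
    intro m₀ c
    rw [hGt, map_sum, hT, map_sum]
    refine Finset.sum_congr rfl fun i _ => ?_
    rw [hNe']
    have h2 : coactN (g (actM (m₀ ⊗ₜ[k] aB i)))
        = rTensor C g (coactM (actM (m₀ ⊗ₜ[k] aB i))) := LinearMap.congr_fun hg _
    rw [h2, hMe']
  set V : M → (A ⊗[k] (A ⊗[k] C)) →ₗ[k] N ⊗[k] C := fun m₀ =>
    rTensor C actN ∘ₗ (TensorProduct.assoc k N A C).symm.toLinearMap
      ∘ₗ rTensor (A ⊗[k] C) (g ∘ₗ actM ∘ₗ TensorProduct.mk k M A m₀) with hVd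
  have key2e : ∀ (m₀ : M) (τ : A ⊗[k] C) (b : A),
      ΦN ((rTensor C g ((rTensor C actM) ((TensorProduct.assoc k M A C).symm (m₀ ⊗ₜ[k] τ)))) ⊗ₜ[k] b)
        = V m₀ ((lTensor A E.psi) ((TensorProduct.assoc k A C A) (τ ⊗ₜ[k] b))) := by
    intro m₀ τ b
    induction τ using TensorProduct.induction_on with
    | zero => simp only [tmul_zero, zero_tmul, map_zero, Finset.sum_const_zero]
    | tmul x d =>
        simp [hΦN, hVd]
    | add u v hu hv => simp only [TensorProduct.add_tmul, tmul_add, map_add, hu, hv]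
  have key2d : ∀ (m₀ : M) (ω : C ⊗[k] C),
      ΦN (T ((TensorProduct.assoc k M C C).symm (m₀ ⊗ₜ[k] ω)))
        = V m₀ (∑ i, (lTensor A E.psi)
            ((TensorProduct.assoc k A C A)
              ((TensorProduct.map (psiAt E (aB i)) (cointAt φc (aD i))) ω))) := by
    intro m₀ ω
    induction ω using TensorProduct.induction_on with
    | zero => simp only [tmul_zero, zero_tmul, map_zero, Finset.sum_const_zero]
    | tmul c₁ c₂ =>
        rw [TensorProduct.assoc_symm_tmul, hT, map_sum, map_sum]
        refine Finset.sum_congr rfl fun i _ => ?_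
        have hΦMi : ΦM ((m₀ ⊗ₜ[k] c₁) ⊗ₜ[k] aB i)
            = (rTensor C actM) ((TensorProduct.assoc k M A C).symm (m₀ ⊗ₜ[k] E.psi (c₁ ⊗ₜ[k] aB i))) := by
          simp [hΦM]
        rw [hΦMi, key2e]
        simp [psiAt, cointAt]
    | add u v hu hv =>
        simp only [tmul_add, map_add, hu, hv, TensorProduct.tmul_add]
        rw [Finset.sum_add_distrib, map_add]
  have key2f : ∀ (m₀ : M) (ω : C ⊗[k] C),
      ∑ i, V m₀ ((aB i) ⊗ₜ[k] ((rTensor C (cointAt φc (aD i))) ω))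
        = rTensor C Gt ((TensorProduct.assoc k M C C).symm (m₀ ⊗ₜ[k] ω)) := by
    intro m₀ ω
    induction ω using TensorProduct.induction_on with
    | zero => simp only [tmul_zero, zero_tmul, map_zero, Finset.sum_const_zero]
    | tmul c₁ c₂ =>
        rw [TensorProduct.assoc_symm_tmul, rTensor_tmul, hGt, TensorProduct.sum_tmul]
        refine Finset.sum_congr rfl fun i _ => ?_
        simp [hVd, cointAt]
    | add u v hu hv =>
        simp only [map_add, TensorProduct.tmul_add, hu, hv, Finset.sum_add_distrib]
  have key2c : ∀ (σ : M ⊗[k] C),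
      ΦN (T ((TensorProduct.assoc k M C C).symm ((lTensor M (Coalgebra.comul (R := k) (A := C))) σ)))
        = rTensor C Gt ((TensorProduct.assoc k M C C).symm ((lTensor M (Coalgebra.comul (R := k) (A := C))) σ)) := by
    intro σ
    induction σ using TensorProduct.induction_on with
    | zero => simp only [tmul_zero, zero_tmul, map_zero, Finset.sum_const_zero]
    | tmul m₀ c =>
        rw [lTensor_tmul, key2d, hφ1 c, map_sum, key2f]
    | add u v hu hv => simp only [map_add, hu, hv]
  have part2 : coactN ∘ₗ (Gt ∘ₗ coactM) = rTensor C (Gt ∘ₗ coactM) ∘ₗ coactM := by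
    apply LinearMap.ext
    intro m
    simp only [coe_comp, Function.comp_apply]
    have step1 : ∀ σ : M ⊗[k] C, coactN (Gt σ) = ΦN (T ((rTensor C coactM) σ)) := by
      intro σ
      induction σ using TensorProduct.induction_on with
      | zero => simp only [tmul_zero, zero_tmul, map_zero, Finset.sum_const_zero]
      | tmul m₀ c => rw [rTensor_tmul]; exact key2a m₀ c
      | add u v hu hv => simp only [map_add, hu, hv]
    rw [step1]
    have coasm : (rTensor C coactM) (coactM m)
        = (TensorProduct.assoc k M C C).symm ((lTensor M (Coalgebra.comul (R := k) (A := C))) (coactM m)) := by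
      have := LinearMap.congr_fun hMc.2 m
      simpa using this
    rw [coasm, key2c (coactM m), ← coasm]
    conv_rhs => rw [LinearMap.rTensor_comp_apply]
  refine ⟨?_, ?_⟩
  · rw [hAvg]; exact part1
  · rw [hAvg]; exact part2
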